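/- Fix λ_p > 0 and λ_l > 0, and for r > 0 define H(r) = 2λ_p r + 2πλ_l ∫₀^r (1 − exp(−2λ_p √(r² − ρ²))) dρ and L(r) = exp(−H(r)). Then for every r > 0, the (improper) integral ∫₀^r exp(−2λ_p √(r² − x²))/√(r² − x²) dx converges, L is differentiable at r, and its derivative equals −2(λ_p + 2πλ_l λ_p r ∫₀^r exp(−2λ_p √(r² − x²))/√(r² − x²) dx) · L(r). -/

import Mathlib

open MeasureTheory Real Set intervalIntegral

private lemma sqrt_helper {r θ : ℝ} (hr : 0 < r) (hc : 0 ≤ Real.cos θ) :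
    Real.sqrt (r ^ 2 - (r * Real.sin θ) ^ 2) = r * Real.cos θ := by
  have h1 : r ^ 2 - (r * Real.sin θ) ^ 2 = (r * Real.cos θ) ^ 2 := by
    have := Real.sin_sq_add_cos_sq θ; nlinarith
  rw [h1, Real.sqrt_sq (by positivity)]

private lemma img_sin {r : ℝ} (hr : 0 < r) :
    (fun θ : ℝ => r * Real.sin θ) '' Ioo 0 (π / 2) = Ioo 0 r := by
  have hpi := Real.pi_pos
  ext y
  constructor
  · rintro ⟨θ, ⟨h1, h2⟩, rfl⟩
    have hs1 : 0 < Real.sin θ := Real.sin_pos_of_pos_of_lt_pi h1 (by linarith)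
    have hs2 : Real.sin θ < 1 := by
      have := Real.strictMonoOn_sin (a := θ) (b := π / 2)
        ⟨by linarith, by linarith⟩ ⟨by linarith, le_refl _⟩ h2
      simpa using this
    refine ⟨by positivity, ?_⟩
    show r * Real.sin θ < r
    nlinarith
  · rintro ⟨hy1, hy2⟩
    have h01 : 0 < y / r := by positivity
    have h02 : y / r < 1 := (div_lt_one hr).mpr hy2
    refine ⟨Real.arcsin (y / r), ⟨Real.arcsin_pos.mpr h01, Real.arcsin_lt_pi_div_two.mpr h02⟩, ?_⟩
    simp only
    rw [Real.sin_arcsin (by linarith) (by linarith)]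
    field_simp

private lemma inj_sin {r : ℝ} (hr : 0 < r) :
    Set.InjOn (fun θ : ℝ => r * Real.sin θ) (Ioo 0 (π / 2)) := by
  have hpi := Real.pi_pos
  intro a ha b hb h
  have h' : Real.sin a = Real.sin b := mul_left_cancel₀ hr.ne' h
  exact Real.injOn_sin ⟨by linarith [ha.1], by linarith [ha.2]⟩
    ⟨by linarith [hb.1], by linarith [hb.2]⟩ h'

private lemma deriv_sin_within {r : ℝ} :
    ∀ θ ∈ Ioo (0:ℝ) (π / 2), HasDerivWithinAt (fun θ : ℝ => r * Real.sin θ)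
      (r * Real.cos θ) (Ioo 0 (π / 2)) θ :=
  fun θ _ => ((Real.hasDerivAt_sin θ).const_mul r).hasDerivWithinAt

/-- Step A: integrability of the singular integrand and its value as a θ-integral. -/
private lemma stepA {lp r : ℝ} (hr : 0 < r) :
    IntervalIntegrable
      (fun x : ℝ => Real.exp (-(2 * lp * Real.sqrt (r ^ 2 - x ^ 2))) / Real.sqrt (r ^ 2 - x ^ 2))
      volume 0 r ∧
    (∫ x in (0:ℝ)..r,
        Real.exp (-(2 * lp * Real.sqrt (r ^ 2 - x ^ 2))) / Real.sqrt (r ^ 2 - x ^ 2))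
      = ∫ θ in (0:ℝ)..(π / 2), Real.exp (-(2 * lp * r * Real.cos θ)) := by
  have hpi := Real.pi_pos
  set g : ℝ → ℝ :=
    fun x => Real.exp (-(2 * lp * Real.sqrt (r ^ 2 - x ^ 2))) / Real.sqrt (r ^ 2 - x ^ 2) with hg
  have hs : MeasurableSet (Ioo (0:ℝ) (π / 2)) := measurableSet_Ioo
  have heq : ∀ θ ∈ Ioo (0:ℝ) (π / 2),
      |r * Real.cos θ| • g (r * Real.sin θ) = Real.exp (-(2 * lp * r * Real.cos θ)) := by
    intro θ hθ
    have hc : 0 < Real.cos θ := Real.cos_pos_of_mem_Ioo ⟨by linarith [hθ.1], hθ.2⟩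
    have hsq := sqrt_helper (θ := θ) hr hc.le
    have hrc : (0:ℝ) < r * Real.cos θ := by positivity
    rw [hg]
    simp only [smul_eq_mul]
    rw [hsq, abs_of_pos hrc, mul_div_cancel₀ _ hrc.ne']
    ring_nf
  have hcont : Continuous fun θ : ℝ => Real.exp (-(2 * lp * r * Real.cos θ)) := by continuity
  have hIoo : IntegrableOn g (Ioo 0 r) volume := by
    rw [← img_sin hr,
      integrableOn_image_iff_integrableOn_abs_deriv_smul hs deriv_sin_within (inj_sin hr)]
    have h1 : IntegrableOn (fun θ : ℝ => Real.exp (-(2 * lp * r * Real.cos θ)))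
        (Ioo 0 (π / 2)) volume :=
      (hcont.integrableOn_Icc).mono_set Ioo_subset_Icc_self
    exact h1.congr_fun (fun θ hθ => (heq θ hθ).symm) hs
  refine ⟨(intervalIntegrable_iff_integrableOn_Ioo_of_le hr.le).mpr hIoo, ?_⟩
  rw [intervalIntegral.integral_of_le hr.le, MeasureTheory.integral_Ioc_eq_integral_Ioo,
    ← img_sin hr,
    MeasureTheory.integral_image_eq_integral_abs_deriv_smul hs deriv_sin_within (inj_sin hr) g,
    MeasureTheory.setIntegral_congr_fun hs heq,
    intervalIntegral.integral_of_le (by linarith : (0:ℝ) ≤ π / 2),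
    MeasureTheory.integral_Ioc_eq_integral_Ioo]

/-- Step B: substitution for the (nonsingular) integrand of `H`. -/
private lemma stepB {lp s : ℝ} (hs : 0 < s) :
    (∫ ρ in (0:ℝ)..s, (1 - Real.exp (-(2 * lp * Real.sqrt (s ^ 2 - ρ ^ 2)))))
      = ∫ θ in (0:ℝ)..(π / 2),
          s * Real.cos θ * (1 - Real.exp (-(2 * lp * s * Real.cos θ))) := by
  have hpi := Real.pi_pos
  set g : ℝ → ℝ := fun x => 1 - Real.exp (-(2 * lp * Real.sqrt (s ^ 2 - x ^ 2))) with hg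
  have hgc : Continuous g := by
    apply Continuous.sub continuous_const
    apply Real.continuous_exp.comp
    apply Continuous.neg
    exact continuous_const.mul (Real.continuous_sqrt.comp (by continuity))
  have hcv := intervalIntegral.integral_comp_smul_deriv
    (f := fun θ : ℝ => s * Real.sin θ) (f' := fun θ : ℝ => s * Real.cos θ)
    (a := 0) (b := π / 2) (g := g)
    (fun θ _ => (Real.hasDerivAt_sin θ).const_mul s)
    (continuous_const.mul Real.continuous_cos).continuousOn hgc
  simp only [Real.sin_zero, Real.sin_pi_div_two, mul_zero, mul_one] at hcv
  rw [← hcv]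
  apply intervalIntegral.integral_congr
  intro θ hθ
  rw [uIcc_of_le (by linarith : (0:ℝ) ≤ π / 2)] at hθ
  have hc : 0 ≤ Real.cos θ := Real.cos_nonneg_of_mem_Icc ⟨by linarith [hθ.1], hθ.2⟩
  have hsq := sqrt_helper (θ := θ) hs hc
  simp only [smul_eq_mul, Function.comp, hg, hsq]
  ring_nf

/-- Step C: differentiating the θ-parametrized integral. -/
private lemma stepC {lp r : ℝ} (hlp : 0 < lp) (hr : 0 < r) :
    HasDerivAt (fun s : ℝ => ∫ θ in (0:ℝ)..(π / 2),
        s * Real.cos θ * (1 - Real.exp (-(2 * lp * s * Real.cos θ))))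
      (∫ θ in (0:ℝ)..(π / 2),
        (Real.cos θ * (1 - Real.exp (-(2 * lp * r * Real.cos θ)))
          + 2 * lp * r * Real.cos θ ^ 2 * Real.exp (-(2 * lp * r * Real.cos θ)))) r := by
  set F : ℝ → ℝ → ℝ :=
    fun s θ => s * Real.cos θ * (1 - Real.exp (-(2 * lp * s * Real.cos θ))) with hF
  set F' : ℝ → ℝ → ℝ :=
    fun s θ => Real.cos θ * (1 - Real.exp (-(2 * lp * s * Real.cos θ)))
      + 2 * lp * s * Real.cos θ ^ 2 * Real.exp (-(2 * lp * s * Real.cos θ)) with hF'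
  set M : ℝ := Real.exp (2 * lp * (r + 1)) with hM
  set C : ℝ := 1 + M + 2 * lp * (r + 1) * M with hC
  have hMpos : 0 < M := Real.exp_pos _
  have hcontF : ∀ s : ℝ, Continuous (F s) := by
    intro s; rw [hF]; continuity
  have hcontF' : Continuous (F' r) := by
    rw [hF']; continuity
  have hde : ∀ (θ s : ℝ), HasDerivAt (fun s => F s θ) (F' s θ) s := by
    intro θ s
    have h1 : HasDerivAt (fun s : ℝ => 2 * lp * s * Real.cos θ) (2 * lp * Real.cos θ) s := by
      simpa using (((hasDerivAt_id s).const_mul (2 * lp)).mul_const (Real.cos θ))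
    have h2 : HasDerivAt (fun s : ℝ => 1 - Real.exp (-(2 * lp * s * Real.cos θ)))
        (-(Real.exp (-(2 * lp * s * Real.cos θ)) * (-(2 * lp * Real.cos θ)))) s :=
      (h1.neg.exp).const_sub 1
    have h3 : HasDerivAt (fun s : ℝ => s * Real.cos θ) (Real.cos θ) s := by
      simpa using (hasDerivAt_id s).mul_const (Real.cos θ)
    have h4 := h3.fun_mul h2
    rw [hF, hF']
    exact h4.congr_deriv (by beta_reduce; ring)
  have key : ∀ x ∈ Metric.ball r 1, ∀ θ : ℝ, ‖F' x θ‖ ≤ C := by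
    intro x hx θ
    have hx1 : |x| ≤ r + 1 := by
      have : |x - r| < 1 := by rwa [Metric.mem_ball, Real.dist_eq] at hx
      have := abs_sub_abs_le_abs_sub x r
      rw [abs_of_pos hr] at this
      linarith
    have hcθ : |Real.cos θ| ≤ 1 := Real.abs_cos_le_one θ
    have hc2 : Real.cos θ ^ 2 ≤ 1 := by
      nlinarith [Real.sin_sq_add_cos_sq θ, sq_nonneg (Real.sin θ)]
    have hxc : |x * Real.cos θ| ≤ r + 1 := by
      rw [abs_mul]; nlinarith [abs_nonneg x]
    set E : ℝ := Real.exp (-(2 * lp * x * Real.cos θ)) with hE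
    have hEpos : 0 < E := Real.exp_pos _
    have hEle : E ≤ M := by
      rw [hE, hM]
      apply Real.exp_le_exp.mpr
      have h5 : -(r + 1) ≤ x * Real.cos θ := by
        have := neg_abs_le (x * Real.cos θ); linarith
      nlinarith
    have e1 : |Real.cos θ * (1 - E)| ≤ 1 + M := by
      rw [abs_mul]
      have h6 : |1 - E| ≤ 1 + M := abs_le.mpr ⟨by nlinarith, by nlinarith⟩
      nlinarith [abs_nonneg (Real.cos θ), abs_nonneg (1 - E)]
    have e2 : |2 * lp * x * Real.cos θ ^ 2 * E| ≤ 2 * lp * (r + 1) * M := by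
      have h7 : |2 * lp * x * Real.cos θ ^ 2 * E| = 2 * lp * |x| * Real.cos θ ^ 2 * E := by
        rw [abs_mul, abs_mul, abs_mul, abs_of_nonneg (by positivity : (0:ℝ) ≤ 2 * lp),
          abs_of_nonneg (sq_nonneg (Real.cos θ)), abs_of_nonneg hEpos.le]
      rw [h7]
      have h8 : |x| * E ≤ (r + 1) * M :=
        mul_le_mul hx1 hEle hEpos.le (by linarith)
      have h9 : |x| * E * Real.cos θ ^ 2 ≤ (r + 1) * M := by
        nlinarith [mul_nonneg (mul_nonneg (abs_nonneg x) hEpos.le)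
          (sub_nonneg.mpr hc2)]
      nlinarith [mul_le_mul_of_nonneg_left h9 (by positivity : (0:ℝ) ≤ 2 * lp)]
    calc ‖F' x θ‖ = |Real.cos θ * (1 - E) + 2 * lp * x * Real.cos θ ^ 2 * E| := by
          rw [hF']; rfl
      _ ≤ |Real.cos θ * (1 - E)| + |2 * lp * x * Real.cos θ ^ 2 * E| := abs_add_le _ _
      _ ≤ C := by rw [hC]; linarith
  have hres := intervalIntegral.hasDerivAt_integral_of_dominated_loc_of_deriv_le
    (𝕜 := ℝ) (μ := volume) (F := F) (F' := F') (a := 0) (b := π / 2) (x₀ := r)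
    (s := Metric.ball r 1) (bound := fun _ => C) (Metric.ball_mem_nhds r one_pos)
    (Filter.Eventually.of_forall fun x => (hcontF x).aestronglyMeasurable.restrict)
    ((hcontF r).intervalIntegrable 0 (π / 2))
    (hcontF'.aestronglyMeasurable.restrict)
    (MeasureTheory.ae_of_all _ fun θ _ x hx => key x hx θ)
    (intervalIntegrable_const)
    (MeasureTheory.ae_of_all _ fun θ _ x _ => hde θ x)
  exact hres.2

/-- Step D: integration by parts identity. -/
private lemma stepD {lp r : ℝ} :
    (∫ θ in (0:ℝ)..(π / 2),
        (Real.cos θ * (1 - Real.exp (-(2 * lp * r * Real.cos θ)))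
          + 2 * lp * r * Real.cos θ ^ 2 * Real.exp (-(2 * lp * r * Real.cos θ))))
      = 2 * lp * r * ∫ θ in (0:ℝ)..(π / 2), Real.exp (-(2 * lp * r * Real.cos θ)) := by
  have hpi := Real.pi_pos
  set b : ℝ := 2 * lp * r with hb
  have hftc : (∫ θ in (0:ℝ)..(π / 2),
      (Real.cos θ * Real.exp (-(b * Real.cos θ))
        + b * Real.sin θ ^ 2 * Real.exp (-(b * Real.cos θ)))) = 1 := by
    have hd : ∀ θ ∈ uIcc (0:ℝ) (π / 2),
        HasDerivAt (fun θ => Real.sin θ * Real.exp (-(b * Real.cos θ)))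
          (Real.cos θ * Real.exp (-(b * Real.cos θ))
            + b * Real.sin θ ^ 2 * Real.exp (-(b * Real.cos θ))) θ := by
      intro θ _
      have h1 : HasDerivAt (fun θ : ℝ => -(b * Real.cos θ)) (b * Real.sin θ) θ := by
        simpa using ((Real.hasDerivAt_cos θ).const_mul b).fun_neg
      have h2 := (Real.hasDerivAt_sin θ).fun_mul h1.exp
      exact h2.congr_deriv (by ring)
    have hint : IntervalIntegrable
        (fun θ => Real.cos θ * Real.exp (-(b * Real.cos θ))
          + b * Real.sin θ ^ 2 * Real.exp (-(b * Real.cos θ))) volume 0 (π / 2) :=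
      (by continuity : Continuous fun θ => Real.cos θ * Real.exp (-(b * Real.cos θ))
          + b * Real.sin θ ^ 2 * Real.exp (-(b * Real.cos θ))).intervalIntegrable 0 (π / 2)
    have := intervalIntegral.integral_eq_sub_of_hasDerivAt hd hint
    simpa using this
  have hid : ∀ θ : ℝ,
      Real.cos θ * (1 - Real.exp (-(b * Real.cos θ)))
          + b * Real.cos θ ^ 2 * Real.exp (-(b * Real.cos θ))
        = Real.cos θ
          - (Real.cos θ * Real.exp (-(b * Real.cos θ))
              + b * Real.sin θ ^ 2 * Real.exp (-(b * Real.cos θ)))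
          + b * Real.exp (-(b * Real.cos θ)) := by
    intro θ
    linear_combination (b * Real.exp (-(b * Real.cos θ))) * (Real.sin_sq_add_cos_sq θ)
  have c1 : Continuous fun θ : ℝ => Real.cos θ := Real.continuous_cos
  have c2 : Continuous fun θ : ℝ => Real.cos θ * Real.exp (-(b * Real.cos θ))
      + b * Real.sin θ ^ 2 * Real.exp (-(b * Real.cos θ)) := by continuity
  have c3 : Continuous fun θ : ℝ => Real.exp (-(b * Real.cos θ)) := by continuity
  calc (∫ θ in (0:ℝ)..(π / 2),
        (Real.cos θ * (1 - Real.exp (-(b * Real.cos θ)))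
          + b * Real.cos θ ^ 2 * Real.exp (-(b * Real.cos θ))))
      = ∫ θ in (0:ℝ)..(π / 2),
          (Real.cos θ
            - (Real.cos θ * Real.exp (-(b * Real.cos θ))
                + b * Real.sin θ ^ 2 * Real.exp (-(b * Real.cos θ)))
            + b * Real.exp (-(b * Real.cos θ))) :=
        intervalIntegral.integral_congr fun θ _ => hid θ
    _ = ((∫ θ in (0:ℝ)..(π / 2), Real.cos θ)
          - ∫ θ in (0:ℝ)..(π / 2),
              (Real.cos θ * Real.exp (-(b * Real.cos θ))
                + b * Real.sin θ ^ 2 * Real.exp (-(b * Real.cos θ))))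
          + b * ∫ θ in (0:ℝ)..(π / 2), Real.exp (-(b * Real.cos θ)) := by
        rw [intervalIntegral.integral_add ((c1.fun_sub c2).intervalIntegrable _ _)
            ((continuous_const.fun_mul c3).intervalIntegrable _ _),
          intervalIntegral.integral_sub (c1.intervalIntegrable _ _)
            (c2.intervalIntegrable _ _),
          intervalIntegral.integral_const_mul]
    _ = 2 * lp * r * ∫ θ in (0:ℝ)..(π / 2), Real.exp (-(b * Real.cos θ)) := by
        rw [hftc, integral_cos]
        simp [hb]

/-- Lemma 7 of the paper (contact distance density of a Poisson line Cox process) as a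
differentiation-under-the-integral-sign identity.  With
`H r = 2λ_p r + 2πλ_l ∫₀^r (1 − e^{−2λ_p √(r²−ρ²)}) dρ` and `L r = e^{−H r}`, for every
`r > 0` the singular integral `∫₀^r e^{−2λ_p √(r²−x²)}/√(r²−x²) dx` converges and
`L′(r) = −2(λ_p + 2πλ_l λ_p r ∫₀^r e^{−2λ_p √(r²−x²)}/√(r²−x²) dx) · L r`. -/
theorem stmt13 (lp ll : ℝ) (hlp : 0 < lp) (hll : 0 < ll)
    (H L : ℝ → ℝ)
    (hH : ∀ r, H r = 2 * lp * r +
      2 * π * ll * ∫ ρ in (0 : ℝ)..r, (1 - Real.exp (-(2 * lp * Real.sqrt (r ^ 2 - ρ ^ 2)))))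
    (hL : ∀ r, L r = Real.exp (-(H r))) :
    ∀ r : ℝ, 0 < r →
      IntervalIntegrable
        (fun x : ℝ => Real.exp (-(2 * lp * Real.sqrt (r ^ 2 - x ^ 2))) / Real.sqrt (r ^ 2 - x ^ 2))
        volume 0 r ∧
      HasDerivAt L
        (-(2 * (lp + 2 * π * ll * lp * r *
          ∫ x in (0 : ℝ)..r,
            Real.exp (-(2 * lp * Real.sqrt (r ^ 2 - x ^ 2))) / Real.sqrt (r ^ 2 - x ^ 2))) * L r)
        r := by
  intro r hr
  obtain ⟨hint, hval⟩ := stepA (lp := lp) hr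
  refine ⟨hint, ?_⟩
  set J : ℝ := ∫ θ in (0:ℝ)..(π / 2), Real.exp (-(2 * lp * r * Real.cos θ)) with hJ
  have hK := stepC hlp hr
  rw [stepD] at hK
  have h2lp : HasDerivAt (fun s : ℝ => 2 * lp * s) (2 * lp) r := by
    simpa using (hasDerivAt_id r).const_mul (2 * lp)
  have hM : HasDerivAt
      (fun s : ℝ => 2 * lp * s + 2 * π * ll * ∫ θ in (0:ℝ)..(π / 2),
        s * Real.cos θ * (1 - Real.exp (-(2 * lp * s * Real.cos θ))))
      (2 * lp + 2 * π * ll * (2 * lp * r * J)) r :=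
    h2lp.add (hK.const_mul (2 * π * ll))
  have hev : H =ᶠ[nhds r]
      (fun s : ℝ => 2 * lp * s + 2 * π * ll * ∫ θ in (0:ℝ)..(π / 2),
        s * Real.cos θ * (1 - Real.exp (-(2 * lp * s * Real.cos θ)))) := by
    filter_upwards [isOpen_Ioi.mem_nhds hr] with s hs
    rw [hH s, stepB hs]
  have hHd : HasDerivAt H (2 * lp + 2 * π * ll * (2 * lp * r * J)) r :=
    hM.congr_of_eventuallyEq hev
  have hLd : HasDerivAt L
      (Real.exp (-(H r)) * (-(2 * lp + 2 * π * ll * (2 * lp * r * J)))) r := by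
    have hLe : L = fun s => Real.exp (-(H s)) := funext hL
    rw [hLe]
    exact hHd.neg.exp
  convert hLd using 1
  rw [hL r, hval]
  ring
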